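/- For a set-valued 2-Segal simplicial set X, the multiplication on the span algebra is associative: the two compositions of the span m : X_1 ×_{X_0} X_1 ← X_2 → X_1 (with legs (d_2, d_0) and d_1) are canonically isomorphic, both being given by the span X_1 ×_{X_0} X_1 ×_{X_0} X_1 ← X_3 → X_1. -/

import Mathlib

open CategoryTheory

/-! Spans of sets attached to a (discrete) 2-Segal simplicial set `X`: the multiplication
span `m : X₁ ×_{X₀} X₁ ← X₂ → X₁` and the associativity of its composites. -/

/-- The inclusion of the vertex `{k} ⊆ [n]`. -/
def vert (k n : ℕ) (h : k ≤ n) : SimplexCategory.mk 0 ⟶ SimplexCategory.mk n :=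
  SimplexCategory.Hom.mk
    ⟨fun _ => ⟨k, by simp [SimplexCategory.len_mk]; omega⟩, by intro a b _; exact le_rfl⟩

/-- The inclusion of the pair `{k, l} ⊆ [n]` (`k ≤ l`). -/
def pairMap (k l n : ℕ) (hkl : k ≤ l) (hln : l ≤ n) :
    SimplexCategory.mk 1 ⟶ SimplexCategory.mk n :=
  SimplexCategory.Hom.mk
    ⟨fun a => ⟨if a.val = 0 then k else l, by simp [SimplexCategory.len_mk]; split_ifs <;> omega⟩,
     by
      intro a b hab
      have := a.isLt; have := b.isLt
      simp only [Fin.le_def] at hab ⊢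
      split_ifs <;> omega⟩

variable (X : SimplexCategoryᵒᵖ ⥤ Type u)

/-- The set of `n`-simplices. -/
def obj (n : ℕ) : Type u := X.obj (Opposite.op (SimplexCategory.mk n))

/-- Restriction of simplices along a morphism of the simplex category. -/
def res {m n : ℕ} (f : SimplexCategory.mk m ⟶ SimplexCategory.mk n) :
    obj X n → obj X m := X.map f.op

lemma res_res {a b c : ℕ} (f : SimplexCategory.mk a ⟶ SimplexCategory.mk b)
    (g : SimplexCategory.mk b ⟶ SimplexCategory.mk c) (x : obj X c) :
    res X f (res X g x) = res X (f ≫ g) x := by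
  show X.map f.op (X.map g.op x) = X.map (f ≫ g).op x
  first
    | (rw [op_comp, Functor.map_comp]; done)
    | (rw [op_comp, Functor.map_comp]; rfl)
    | (rw [op_comp, FunctorToTypes.map_comp_apply])

lemma res_congr {m n : ℕ} {f g : SimplexCategory.mk m ⟶ SimplexCategory.mk n}
    (h : f = g) (x : obj X n) : res X f x = res X g x := by rw [h]

/-- source vertex of an edge -/
def v0 : obj X 1 → obj X 0 := res X (vert 0 1 (by omega))
/-- target vertex of an edge -/
def v1 : obj X 1 → obj X 0 := res X (vert 1 1 (by omega))

/-- the edge `{k,l}` of an `n`-simplex -/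
def ed (k l n : ℕ) (hkl : k ≤ l) (hln : l ≤ n) : obj X n → obj X 1 :=
  res X (pairMap k l n hkl hln)

/-- `X₁ ×_{X₀} X₁`: pairs of composable edges. -/
def P2 : Type u := {p : obj X 1 × obj X 1 // v1 X p.1 = v0 X p.2}

/-- `X₁ ×_{X₀} X₁ ×_{X₀} X₁`: triples of composable edges. -/
def P3 : Type u :=
  {p : obj X 1 × obj X 1 × obj X 1 //
    v1 X p.1 = v0 X p.2.1 ∧ v1 X p.2.1 = v0 X p.2.2}

lemma compat01_12 (x : obj X 2) :
    v1 X (ed X 0 1 2 (by omega) (by omega) x) = v0 X (ed X 1 2 2 (by omega) (by omega) x) := by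
  rw [v1, v0, ed, ed, res_res, res_res]
  exact res_congr X (by apply SimplexCategory.Hom.ext; ext a; fin_cases a <;> rfl) x

lemma compat02_12 (x : obj X 2) :
    v1 X (ed X 0 2 2 (by omega) (by omega) x) = v1 X (ed X 1 2 2 (by omega) (by omega) x) := by
  rw [v1, ed, ed, res_res, res_res]
  exact res_congr X (by apply SimplexCategory.Hom.ext; ext a; fin_cases a <;> rfl) x

lemma compat02_01 (x : obj X 2) :
    v0 X (ed X 0 2 2 (by omega) (by omega) x) = v0 X (ed X 0 1 2 (by omega) (by omega) x) := by
  rw [v0, ed, ed, res_res, res_res]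
  exact res_congr X (by apply SimplexCategory.Hom.ext; ext a; fin_cases a <;> rfl) x

/-- The left leg of the multiplication span `m`: `X₂ → X₁ ×_{X₀} X₁`,
`x ↦ (∂₂x, ∂₀x)`. -/
def mL : obj X 2 → P2 X :=
  fun x => ⟨(ed X 0 1 2 (by omega) (by omega) x, ed X 1 2 2 (by omega) (by omega) x),
    compat01_12 X x⟩

/-- The right leg of the multiplication span `m`: `X₂ → X₁`, `x ↦ ∂₁x`. -/
def mR : obj X 2 → obj X 1 := ed X 0 2 2 (by omega) (by omega)

/-- Apex of the span `m × id : X₁×X₀×X₁×X₀×X₁ ← X₂ ×_{X₀} X₁ → X₁ ×_{X₀} X₁`. -/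
def Apex1 : Type u :=
  {p : obj X 2 × obj X 1 // v1 X (ed X 0 2 2 (by omega) (by omega) p.1) = v0 X p.2}

/-- Left leg of `m × id`. -/
def legL1 : Apex1 X → P3 X :=
  fun p => ⟨(ed X 0 1 2 (by omega) (by omega) p.1.1,
      ed X 1 2 2 (by omega) (by omega) p.1.1, p.1.2),
    ⟨compat01_12 X p.1.1, by rw [← compat02_12 X p.1.1]; exact p.2⟩⟩

/-- Right leg of `m × id`. -/
def legR1 : Apex1 X → P2 X :=
  fun p => ⟨(ed X 0 2 2 (by omega) (by omega) p.1.1, p.1.2), p.2⟩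

/-- Apex of the composite span `m ∘ (m × id)`: the fiber product of `m × id` and `m`
over `X₁ ×_{X₀} X₁`. -/
def K1 : Type u := {w : Apex1 X × obj X 2 // mL X w.2 = legR1 X w.1}

/-- Apex of the span `id × m`. -/
def Apex2 : Type u :=
  {p : obj X 1 × obj X 2 // v1 X p.1 = v0 X (ed X 0 1 2 (by omega) (by omega) p.2)}

/-- Left leg of `id × m`. -/
def legL2 : Apex2 X → P3 X :=
  fun p => ⟨(p.1.1, ed X 0 1 2 (by omega) (by omega) p.1.2,
      ed X 1 2 2 (by omega) (by omega) p.1.2),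
    ⟨p.2, compat01_12 X p.1.2⟩⟩

/-- Right leg of `id × m`. -/
def legR2 : Apex2 X → P2 X :=
  fun p => ⟨(p.1.1, ed X 0 2 2 (by omega) (by omega) p.1.2),
    by rw [compat02_01 X p.1.2]; exact p.2⟩

/-- Apex of the composite span `m ∘ (id × m)`. -/
def K2 : Type u := {w : Apex2 X × obj X 2 // mL X w.2 = legR2 X w.1}

lemma compat3a (x : obj X 3) :
    v1 X (ed X 0 1 3 (by omega) (by omega) x) = v0 X (ed X 1 2 3 (by omega) (by omega) x) := by
  rw [v1, v0, ed, ed, res_res, res_res]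
  exact res_congr X (by apply SimplexCategory.Hom.ext; ext a; fin_cases a <;> rfl) x

lemma compat3b (x : obj X 3) :
    v1 X (ed X 1 2 3 (by omega) (by omega) x) = v0 X (ed X 2 3 3 (by omega) (by omega) x) := by
  rw [v1, v0, ed, ed, res_res, res_res]
  exact res_congr X (by apply SimplexCategory.Hom.ext; ext a; fin_cases a <;> rfl) x

/-- Left leg of the span `X₁ ×_{X₀} X₁ ×_{X₀} X₁ ← X₃ → X₁`: the three inert edges
`{0,1}, {1,2}, {2,3}` of a 3-simplex. -/
def L3 : obj X 3 → P3 X :=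
  fun x => ⟨(ed X 0 1 3 (by omega) (by omega) x, ed X 1 2 3 (by omega) (by omega) x,
      ed X 2 3 3 (by omega) (by omega) x),
    ⟨compat3a X x, compat3b X x⟩⟩

/-- Right leg: the long (active) edge `{0,3}` of a 3-simplex. -/
def R3 : obj X 3 → obj X 1 := ed X 0 3 3 (by omega) (by omega)

/-! Auxiliary lemmas: how the edges of the faces of a 3-simplex relate to the edges of
the 3-simplex itself, plus one more vertex-compatibility lemma. -/

lemma e01_d3 (x : obj X 3) :
    ed X 0 1 2 (by omega) (by omega) (res X (SimplexCategory.δ (3 : Fin 4)) x) =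
    ed X 0 1 3 (by omega) (by omega) x := by
  rw [ed, ed, res_res]
  exact res_congr X (by apply SimplexCategory.Hom.ext; ext a; fin_cases a <;> rfl) x

lemma e12_d3 (x : obj X 3) :
    ed X 1 2 2 (by omega) (by omega) (res X (SimplexCategory.δ (3 : Fin 4)) x) =
    ed X 1 2 3 (by omega) (by omega) x := by
  rw [ed, ed, res_res]
  exact res_congr X (by apply SimplexCategory.Hom.ext; ext a; fin_cases a <;> rfl) x

lemma e02_d3 (x : obj X 3) :
    ed X 0 2 2 (by omega) (by omega) (res X (SimplexCategory.δ (3 : Fin 4)) x) =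
    ed X 0 2 3 (by omega) (by omega) x := by
  rw [ed, ed, res_res]
  exact res_congr X (by apply SimplexCategory.Hom.ext; ext a; fin_cases a <;> rfl) x

lemma e01_d1 (x : obj X 3) :
    ed X 0 1 2 (by omega) (by omega) (res X (SimplexCategory.δ (1 : Fin 4)) x) =
    ed X 0 2 3 (by omega) (by omega) x := by
  rw [ed, ed, res_res]
  exact res_congr X (by apply SimplexCategory.Hom.ext; ext a; fin_cases a <;> rfl) x

lemma e12_d1 (x : obj X 3) :
    ed X 1 2 2 (by omega) (by omega) (res X (SimplexCategory.δ (1 : Fin 4)) x) =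
    ed X 2 3 3 (by omega) (by omega) x := by
  rw [ed, ed, res_res]
  exact res_congr X (by apply SimplexCategory.Hom.ext; ext a; fin_cases a <;> rfl) x

lemma e02_d1 (x : obj X 3) :
    ed X 0 2 2 (by omega) (by omega) (res X (SimplexCategory.δ (1 : Fin 4)) x) =
    ed X 0 3 3 (by omega) (by omega) x := by
  rw [ed, ed, res_res]
  exact res_congr X (by apply SimplexCategory.Hom.ext; ext a; fin_cases a <;> rfl) x

lemma e01_d2 (x : obj X 3) :
    ed X 0 1 2 (by omega) (by omega) (res X (SimplexCategory.δ (2 : Fin 4)) x) =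
    ed X 0 1 3 (by omega) (by omega) x := by
  rw [ed, ed, res_res]
  exact res_congr X (by apply SimplexCategory.Hom.ext; ext a; fin_cases a <;> rfl) x

lemma e12_d2 (x : obj X 3) :
    ed X 1 2 2 (by omega) (by omega) (res X (SimplexCategory.δ (2 : Fin 4)) x) =
    ed X 1 3 3 (by omega) (by omega) x := by
  rw [ed, ed, res_res]
  exact res_congr X (by apply SimplexCategory.Hom.ext; ext a; fin_cases a <;> rfl) x

lemma e02_d2 (x : obj X 3) :
    ed X 0 2 2 (by omega) (by omega) (res X (SimplexCategory.δ (2 : Fin 4)) x) =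
    ed X 0 3 3 (by omega) (by omega) x := by
  rw [ed, ed, res_res]
  exact res_congr X (by apply SimplexCategory.Hom.ext; ext a; fin_cases a <;> rfl) x

lemma e01_d0 (x : obj X 3) :
    ed X 0 1 2 (by omega) (by omega) (res X (SimplexCategory.δ (0 : Fin 4)) x) =
    ed X 1 2 3 (by omega) (by omega) x := by
  rw [ed, ed, res_res]
  exact res_congr X (by apply SimplexCategory.Hom.ext; ext a; fin_cases a <;> rfl) x

lemma e12_d0 (x : obj X 3) :
    ed X 1 2 2 (by omega) (by omega) (res X (SimplexCategory.δ (0 : Fin 4)) x) =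
    ed X 2 3 3 (by omega) (by omega) x := by
  rw [ed, ed, res_res]
  exact res_congr X (by apply SimplexCategory.Hom.ext; ext a; fin_cases a <;> rfl) x

lemma e02_d0 (x : obj X 3) :
    ed X 0 2 2 (by omega) (by omega) (res X (SimplexCategory.δ (0 : Fin 4)) x) =
    ed X 1 3 3 (by omega) (by omega) x := by
  rw [ed, ed, res_res]
  exact res_congr X (by apply SimplexCategory.Hom.ext; ext a; fin_cases a <;> rfl) x

lemma compat3c (x : obj X 3) :
    v1 X (ed X 0 2 3 (by omega) (by omega) x) = v0 X (ed X 2 3 3 (by omega) (by omega) x) := by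
  rw [v1, v0, ed, ed, res_res, res_res]
  exact res_congr X (by apply SimplexCategory.Hom.ext; ext a; fin_cases a <;> rfl) x

/-- The map `X₃ → K₁` inverse to the 2-Segal structure map. -/
def toK1 (x : obj X 3) : K1 X :=
  ⟨⟨⟨⟨res X (SimplexCategory.δ (3 : Fin 4)) x, ed X 2 3 3 (by omega) (by omega) x⟩,
      by rw [e02_d3]; exact compat3c X x⟩,
    res X (SimplexCategory.δ (1 : Fin 4)) x⟩,
    Subtype.ext (Prod.ext ((e01_d1 X x).trans (e02_d3 X x).symm) (e12_d1 X x))⟩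

/-- The map `X₃ → K₂` inverse to the 2-Segal structure map. -/
def toK2 (x : obj X 3) : K2 X :=
  ⟨⟨⟨⟨ed X 0 1 3 (by omega) (by omega) x, res X (SimplexCategory.δ (0 : Fin 4)) x⟩,
      by rw [e01_d0]; exact compat3a X x⟩,
    res X (SimplexCategory.δ (2 : Fin 4)) x⟩,
    Subtype.ext (Prod.ext (e01_d2 X x) ((e12_d2 X x).trans (e02_d0 X x).symm))⟩

/-- For a (discrete) 2-Segal simplicial set `X` — here only the two lowest 2-Segal
conditions, for `n = 3` and `(i,j) ∈ {(0,2), (1,3)}`, are needed — the two composites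
`m ∘ (m × id)` and `m ∘ (id × m)` of the multiplication span
`m : X₁ ×_{X₀} X₁ ← X₂ → X₁` are both isomorphic, as spans, to the span
`X₁ ×_{X₀} X₁ ×_{X₀} X₁ ← X₃ → X₁` whose left leg is restriction along the three inert
maps `[1] → [3]` and whose right leg is restriction along the active map `[1] → [3]`.
In particular the span multiplication is associative. -/
theorem two_segal_span_assoc
    (hseg02 : ∀ a b : obj X 2,
      ed X 0 2 2 (by omega) (by omega) a = ed X 0 1 2 (by omega) (by omega) b →
      ∃! x : obj X 3,
        res X (SimplexCategory.δ (3 : Fin 4)) x = a ∧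
        res X (SimplexCategory.δ (1 : Fin 4)) x = b)
    (hseg13 : ∀ a b : obj X 2,
      ed X 1 2 2 (by omega) (by omega) a = ed X 0 2 2 (by omega) (by omega) b →
      ∃! x : obj X 3,
        res X (SimplexCategory.δ (2 : Fin 4)) x = a ∧
        res X (SimplexCategory.δ (0 : Fin 4)) x = b) :
    (∃ e : K1 X ≃ obj X 3,
      (∀ w : K1 X, L3 X (e w) = legL1 X w.1.1) ∧
      (∀ w : K1 X, R3 X (e w) = mR X w.1.2)) ∧
    (∃ e : K2 X ≃ obj X 3,
      (∀ w : K2 X, L3 X (e w) = legL2 X w.1.1) ∧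
      (∀ w : K2 X, R3 X (e w) = mR X w.1.2)) := by
  constructor
  · -- m ∘ (m × id)
    have h : ∀ w : K1 X, ed X 0 2 2 (by omega) (by omega) w.1.1.1.1 =
        ed X 0 1 2 (by omega) (by omega) w.1.2 :=
      fun w => (congrArg (fun q : P2 X => q.1.1) w.2).symm
    have h2 : ∀ w : K1 X, ed X 1 2 2 (by omega) (by omega) w.1.2 = w.1.1.1.2 :=
      fun w => congrArg (fun q : P2 X => q.1.2) w.2
    set f : K1 X → obj X 3 := fun w => (hseg02 _ _ (h w)).choose with hf
    have hd3 : ∀ w, res X (SimplexCategory.δ (3 : Fin 4)) (f w) = w.1.1.1.1 :=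
      fun w => (hseg02 _ _ (h w)).choose_spec.1.1
    have hd1 : ∀ w, res X (SimplexCategory.δ (1 : Fin 4)) (f w) = w.1.2 :=
      fun w => (hseg02 _ _ (h w)).choose_spec.1.2
    refine ⟨⟨f, toK1 X, ?_, ?_⟩, ?_, ?_⟩
    · intro w
      refine Subtype.ext (Prod.ext (Subtype.ext (Prod.ext ?_ ?_)) ?_)
      · exact hd3 w
      · show ed X 2 3 3 _ _ (f w) = w.1.1.1.2
        rw [← e12_d1, hd1 w]; exact h2 w
      · exact hd1 w
    · intro x
      exact ((hseg02 _ _ (h (toK1 X x))).choose_spec.2 x ⟨rfl, rfl⟩).symm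
    · intro w
      refine Subtype.ext (Prod.ext ?_ (Prod.ext ?_ ?_))
      · show ed X 0 1 3 _ _ (f w) = ed X 0 1 2 _ _ w.1.1.1.1
        rw [← e01_d3, hd3 w]
      · show ed X 1 2 3 _ _ (f w) = ed X 1 2 2 _ _ w.1.1.1.1
        rw [← e12_d3, hd3 w]
      · show ed X 2 3 3 _ _ (f w) = w.1.1.1.2
        rw [← e12_d1, hd1 w]; exact h2 w
    · intro w
      show ed X 0 3 3 _ _ (f w) = ed X 0 2 2 _ _ w.1.2
      rw [← e02_d1, hd1 w]
  · -- m ∘ (id × m)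
    have h : ∀ w : K2 X, ed X 1 2 2 (by omega) (by omega) w.1.2 =
        ed X 0 2 2 (by omega) (by omega) w.1.1.1.2 :=
      fun w => congrArg (fun q : P2 X => q.1.2) w.2
    have h2 : ∀ w : K2 X, ed X 0 1 2 (by omega) (by omega) w.1.2 = w.1.1.1.1 :=
      fun w => congrArg (fun q : P2 X => q.1.1) w.2
    set f : K2 X → obj X 3 := fun w => (hseg13 _ _ (h w)).choose with hf
    have hd2 : ∀ w, res X (SimplexCategory.δ (2 : Fin 4)) (f w) = w.1.2 :=
      fun w => (hseg13 _ _ (h w)).choose_spec.1.1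
    have hd0 : ∀ w, res X (SimplexCategory.δ (0 : Fin 4)) (f w) = w.1.1.1.2 :=
      fun w => (hseg13 _ _ (h w)).choose_spec.1.2
    refine ⟨⟨f, toK2 X, ?_, ?_⟩, ?_, ?_⟩
    · intro w
      refine Subtype.ext (Prod.ext (Subtype.ext (Prod.ext ?_ ?_)) ?_)
      · show ed X 0 1 3 _ _ (f w) = w.1.1.1.1
        rw [← e01_d2, hd2 w]; exact h2 w
      · exact hd0 w
      · exact hd2 w
    · intro x
      exact ((hseg13 _ _ (h (toK2 X x))).choose_spec.2 x ⟨rfl, rfl⟩).symm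
    · intro w
      refine Subtype.ext (Prod.ext ?_ (Prod.ext ?_ ?_))
      · show ed X 0 1 3 _ _ (f w) = w.1.1.1.1
        rw [← e01_d2, hd2 w]; exact h2 w
      · show ed X 1 2 3 _ _ (f w) = ed X 0 1 2 _ _ w.1.1.1.2
        rw [← e01_d0, hd0 w]
      · show ed X 2 3 3 _ _ (f w) = ed X 1 2 2 _ _ w.1.1.1.2
        rw [← e12_d0, hd0 w]
    · intro w
      show ed X 0 3 3 _ _ (f w) = ed X 0 2 2 _ _ w.1.2
      rw [← e02_d2, hd2 w]
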